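/- For F ∈ GL(3,ℝ) with polar decomposition F = RD, the map (t', R') ↦ ∫_{B_ρ(0)} |F·h − R'·h − t'|² dh over ℝ³ × SO(3) decomposes as (4πρ³/3)|t'|² + (4πρ⁵/15)(‖D‖_F² + 3 − 2·trace(DᵀR̃)) where R̃ = RᵀR'. -/

import Mathlib

open Matrix MeasureTheory

noncomputable def frob {n : ℕ} (A : Matrix (Fin n) (Fin n) ℝ) : ℝ :=
  Real.sqrt ((Aᵀ * A).trace)

noncomputable def mv (Z : Matrix (Fin 3) (Fin 3) ℝ) (h : EuclideanSpace ℝ (Fin 3)) :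
    EuclideanSpace ℝ (Fin 3) :=
  (EuclideanSpace.equiv (Fin 3) ℝ).symm (Z.mulVec (EuclideanSpace.equiv (Fin 3) ℝ h))

section aux

lemma vol_ball3 (ρ : ℝ) (hρ : 0 < ρ) :
    (volume (Metric.ball (0 : EuclideanSpace ℝ (Fin 3)) ρ)).toReal = 4 * Real.pi * ρ ^ 3 / 3 := by
  rw [EuclideanSpace.volume_ball]
  have h12 : Real.Gamma (1/2) = Real.sqrt Real.pi := Real.Gamma_one_half_eq
  have h32 : Real.Gamma (3/2) = Real.sqrt Real.pi / 2 := by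
    have := Real.Gamma_add_one (s := 1/2) (by norm_num)
    rw [h12] at this; norm_num at this ⊢; linarith
  have h52 : Real.Gamma ((Fintype.card (Fin 3) : ℝ) / 2 + 1) = 3 / 4 * Real.sqrt Real.pi := by
    have := Real.Gamma_add_one (s := 3/2) (by norm_num)
    rw [h32] at this
    norm_num [this]; ring_nf; rw [show (3:ℝ)/2+1 = 5/2 by norm_num] at this; linarith
  rw [h52]
  have hsq : Real.sqrt Real.pi ^ Fintype.card (Fin 3) / (3/4 * Real.sqrt Real.pi)
      = 4 * Real.pi / 3 := by
    have h0 : (0:ℝ) < Real.sqrt Real.pi := Real.sqrt_pos.2 Real.pi_pos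
    have : Real.sqrt Real.pi ^ 2 = Real.pi := Real.sq_sqrt Real.pi_pos.le
    field_simp [Fintype.card_fin]
    rw [Fintype.card_fin, show Real.sqrt Real.pi ^ 3 = Real.sqrt Real.pi * Real.sqrt Real.pi ^ 2 by ring, this]
  rw [hsq, ← ENNReal.ofReal_pow hρ.le, ← ENNReal.ofReal_mul (by positivity)]
  rw [ENNReal.toReal_ofReal (by positivity), Fintype.card_fin]
  ring

lemma cont_int (ρ : ℝ) (g : EuclideanSpace ℝ (Fin 3) → ℝ) (hg : Continuous g) :
    IntegrableOn g (Metric.ball (0 : EuclideanSpace ℝ (Fin 3)) ρ) volume :=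
  (hg.continuousOn.integrableOn_compact (isCompact_closedBall 0 ρ)).mono_set
    Metric.ball_subset_closedBall

noncomputable def negCoord (j : Fin 3) :
    EuclideanSpace ℝ (Fin 3) ≃ₗᵢ[ℝ] EuclideanSpace ℝ (Fin 3) where
  toLinearEquiv := LinearEquiv.ofInvolutive
    { toFun := fun h => WithLp.toLp 2 (fun i => if i = j then -(h i) else h i : Fin 3 → ℝ)
      map_add' := by
        intro x y; ext i; by_cases hi : i = j <;> simp [hi] <;> ring
      map_smul' := by
        intro c x; ext i; by_cases hi : i = j <;> simp [hi]
      }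
    (by intro x; ext i; by_cases hi : i = j <;> simp [hi])
  norm_map' := by
    intro x
    simp only [LinearEquiv.coe_mk, LinearEquiv.ofInvolutive]
    rw [EuclideanSpace.norm_eq, EuclideanSpace.norm_eq]
    congr 1
    apply Finset.sum_congr rfl
    intro i _
    by_cases hi : i = j <;> simp [hi]

lemma negCoord_apply (j : Fin 3) (h : EuclideanSpace ℝ (Fin 3)) (i : Fin 3) :
    negCoord j h i = if i = j then -(h i) else h i := rfl

lemma isom_setIntegral (e : EuclideanSpace ℝ (Fin 3) ≃ₗᵢ[ℝ] EuclideanSpace ℝ (Fin 3)) (ρ : ℝ)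
    (g : EuclideanSpace ℝ (Fin 3) → ℝ) :
    ∫ h in Metric.ball (0 : EuclideanSpace ℝ (Fin 3)) ρ, g (e h)
      = ∫ h in Metric.ball (0 : EuclideanSpace ℝ (Fin 3)) ρ, g h := by
  have hpre : e ⁻¹' (Metric.ball 0 ρ) = Metric.ball 0 ρ := by
    ext x; simp [mem_ball_zero_iff, e.norm_map]
  have := (e.measurePreserving).setIntegral_preimage_emb
    (e.toHomeomorph.measurableEmbedding) g (Metric.ball 0 ρ)
  rwa [hpre] at this

lemma mom1 (ρ : ℝ) (j : Fin 3) :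
    ∫ h in Metric.ball (0 : EuclideanSpace ℝ (Fin 3)) ρ, h j = 0 := by
  have key := isom_setIntegral (negCoord j) ρ (fun h => h j)
  have h1 : ∀ h : EuclideanSpace ℝ (Fin 3), (negCoord j h) j = -(h j) := by
    intro h; simp [negCoord_apply]
  simp only [h1] at key
  rw [integral_neg] at key
  linarith

lemma normsq_int (ρ : ℝ) (hρ : 0 < ρ) :
    ∫ h in Metric.ball (0 : EuclideanSpace ℝ (Fin 3)) ρ, ‖h‖ ^ 2
      = 4 * Real.pi * ρ ^ 5 / 5 := by
  set f : ℝ → ℝ := Set.indicator (Set.Iio ρ) (fun r => r ^ 2) with hf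
  have key : ∫ h in Metric.ball (0 : EuclideanSpace ℝ (Fin 3)) ρ, ‖h‖ ^ 2
      = ∫ h : EuclideanSpace ℝ (Fin 3), f ‖h‖ := by
    rw [← integral_indicator measurableSet_ball]
    congr 1
    ext h
    simp only [hf, Set.indicator, mem_ball_zero_iff, Set.mem_Iio]
  rw [key, integral_fun_norm_addHaar volume f]
  have hdim : Module.finrank ℝ (EuclideanSpace ℝ (Fin 3)) = 3 := finrank_euclideanSpace_fin
  rw [hdim]
  have hIoi : ∫ y in Set.Ioi (0:ℝ), y ^ (3-1) • f y = ρ ^ 5 / 5 := by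
    have : ∀ y : ℝ, y ^ (3-1) • f y = Set.indicator (Set.Iio ρ) (fun r => r ^ 4) y * 1 := by
      intro y
      simp only [hf, Set.indicator, smul_eq_mul]
      split_ifs <;> ring
    simp_rw [this, mul_one]
    rw [setIntegral_indicator measurableSet_Iio, Set.Ioi_inter_Iio]
    rw [← integral_Ioc_eq_integral_Ioo, ← intervalIntegral.integral_of_le hρ.le]
    rw [integral_pow]
    norm_num
  rw [hIoi, measureReal_def, vol_ball3 1 one_pos]
  simp only [smul_eq_mul, nsmul_eq_mul]
  ring

lemma normsq_coords (h : EuclideanSpace ℝ (Fin 3)) : ‖h‖ ^ 2 = ∑ i, (h i) ^ 2 := by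
  rw [EuclideanSpace.norm_eq, Real.sq_sqrt (by positivity)]
  simp [Real.norm_eq_abs, sq_abs]

lemma mom2 (ρ : ℝ) (hρ : 0 < ρ) (j k : Fin 3) :
    ∫ h in Metric.ball (0 : EuclideanSpace ℝ (Fin 3)) ρ, (h j * h k)
      = if j = k then 4 * Real.pi * ρ ^ 5 / 15 else 0 := by
  by_cases hjk : j = k
  · subst hjk
    rw [if_pos rfl]
    -- all diagonal moments are equal
    have hdiag : ∀ j : Fin 3,
        ∫ h in Metric.ball (0 : EuclideanSpace ℝ (Fin 3)) ρ, (h j * h j)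
          = ∫ h in Metric.ball (0 : EuclideanSpace ℝ (Fin 3)) ρ, (h 0 * h 0) := by
      intro j
      have key := isom_setIntegral (LinearIsometryEquiv.piLpCongrLeft 2 ℝ ℝ (Equiv.swap j 0)) ρ
        (fun h => h 0 * h 0)
      have h1 : ∀ h : EuclideanSpace ℝ (Fin 3),
          (LinearIsometryEquiv.piLpCongrLeft 2 ℝ ℝ (Equiv.swap j 0)) h 0 = h j := by
        intro h
        simp only [LinearIsometryEquiv.piLpCongrLeft_apply, Equiv.piCongrLeft']
        exact congrArg h (Equiv.swap_apply_right j 0)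
      simp only [h1] at key
      exact key
    have hint : ∀ i : Fin 3, IntegrableOn
        (fun h : EuclideanSpace ℝ (Fin 3) => (h i) ^ 2)
        (Metric.ball (0 : EuclideanSpace ℝ (Fin 3)) ρ) volume := by
      intro i; exact cont_int ρ _ (by fun_prop)
    have hsum : ∑ i : Fin 3, ∫ h in Metric.ball (0 : EuclideanSpace ℝ (Fin 3)) ρ, (h i) ^ 2
        = 4 * Real.pi * ρ ^ 5 / 5 := by
      rw [← integral_finset_sum _ (fun i _ => hint i)]
      rw [← normsq_int ρ hρ]
      congr 1
      ext h
      rw [normsq_coords]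
    simp only [← sq] at hdiag ⊢
    have h3 : (3:ℝ) * ∫ h in Metric.ball (0 : EuclideanSpace ℝ (Fin 3)) ρ, (h 0) ^ 2
        = 4 * Real.pi * ρ ^ 5 / 5 := by
      rw [← hsum, Fin.sum_univ_three, hdiag 0, hdiag 1, hdiag 2]
      ring
    have := hdiag j
    linarith
  · simp only [if_neg hjk]
    have key := isom_setIntegral (negCoord j) ρ (fun h => h j * h k)
    have h1 : ∀ h : EuclideanSpace ℝ (Fin 3),
        (negCoord j h) j * (negCoord j h) k = -(h j * h k) := by
      intro h
      have hk : k ≠ j := fun hc => hjk hc.symm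
      simp [negCoord_apply, hk]
    simp only [h1] at key
    rw [integral_neg] at key
    linarith

end aux

theorem grioli_integral_decomposition (F R D : Matrix (Fin 3) (Fin 3) ℝ)
    (hF : IsUnit F.det) (hR : Rᵀ * R = 1) (hRdet : R.det = 1)
    (hD : D.PosDef) (hD2 : D * D = Fᵀ * F) (hFRD : F = R * D)
    (t' : EuclideanSpace ℝ (Fin 3)) (R' : Matrix (Fin 3) (Fin 3) ℝ)
    (hR' : R'ᵀ * R' = 1) (hR'det : R'.det = 1) (ρ : ℝ) (hρ : 0 < ρ) :
    ∫ h in Metric.ball (0 : EuclideanSpace ℝ (Fin 3)) ρ, ‖mv F h - mv R' h - t'‖ ^ 2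
      = (4 * Real.pi * ρ ^ 3 / 3) * ‖t'‖ ^ 2 +
        (4 * Real.pi * ρ ^ 5 / 15) *
          (frob D ^ 2 + 3 - 2 * (Dᵀ * (Rᵀ * R')).trace) := by
  set Z : Matrix (Fin 3) (Fin 3) ℝ := F - R' with hZ
  set B := Metric.ball (0 : EuclideanSpace ℝ (Fin 3)) ρ with hB
  -- pointwise expansion
  have hco : ∀ (h : EuclideanSpace ℝ (Fin 3)) (i : Fin 3),
      (mv F h - mv R' h - t') i = (∑ j, F i j * h j) - (∑ j, R' i j * h j) - t' i := by
    intro h i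
    simp [mv, Matrix.mulVec, dotProduct]
  have hpt : ∀ h : EuclideanSpace ℝ (Fin 3),
      ‖mv F h - mv R' h - t'‖ ^ 2
        = (∑ i, ∑ j, ∑ k, (Z i j * Z i k) * (h j * h k))
          + ((∑ i, ∑ j, (-2 * t' i * Z i j) * h j) + ∑ i, (t' i) ^ 2) := by
    intro h
    rw [normsq_coords]
    simp only [hco, hZ, Matrix.sub_apply]
    simp only [Fin.sum_univ_three]
    ring
  simp only [hpt]
  -- integrability of pieces
  have hintA : IntegrableOn
      (fun h : EuclideanSpace ℝ (Fin 3) =>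
        ∑ i, ∑ j, ∑ k, (Z i j * Z i k) * (h j * h k)) B volume :=
    cont_int ρ _ (by fun_prop)
  have hintL : IntegrableOn
      (fun h : EuclideanSpace ℝ (Fin 3) =>
        ∑ i, ∑ j, (-2 * t' i * Z i j) * h j) B volume :=
    cont_int ρ _ (by fun_prop)
  have hintC : IntegrableOn
      (fun _ : EuclideanSpace ℝ (Fin 3) => ∑ i, (t' i) ^ 2) B volume :=
    cont_int ρ _ (by fun_prop)
  have hintLC : IntegrableOn
      (fun h : EuclideanSpace ℝ (Fin 3) =>
        (∑ i, ∑ j, (-2 * t' i * Z i j) * h j) + ∑ i, (t' i) ^ 2) B volume :=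
    cont_int ρ _ (by fun_prop)
  rw [integral_add hintA hintLC, integral_add hintL hintC]
  -- quadratic term
  have hA : ∫ h in B, ∑ i, ∑ j, ∑ k, (Z i j * Z i k) * (h j * h k)
      = (4 * Real.pi * ρ ^ 5 / 15) * ∑ i, ∑ j, (Z i j) ^ 2 := by
    rw [integral_finset_sum _ (fun i _ => cont_int ρ _ (by fun_prop))]
    have : ∀ i : Fin 3, ∫ h in B, ∑ j, ∑ k, (Z i j * Z i k) * (h j * h k)
        = (4 * Real.pi * ρ ^ 5 / 15) * ∑ j, (Z i j) ^ 2 := by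
      intro i
      rw [integral_finset_sum _ (fun j _ => cont_int ρ _ (by fun_prop))]
      have : ∀ j : Fin 3, ∫ h in B, ∑ k, (Z i j * Z i k) * (h j * h k)
          = (4 * Real.pi * ρ ^ 5 / 15) * (Z i j) ^ 2 := by
        intro j
        rw [integral_finset_sum _ (fun k _ => cont_int ρ _ (by fun_prop))]
        have : ∀ k : Fin 3, ∫ h in B, (Z i j * Z i k) * (h j * h k)
            = (Z i j * Z i k) * (if j = k then 4 * Real.pi * ρ ^ 5 / 15 else 0) := by
          intro k
          rw [integral_const_mul, mom2 ρ hρ j k]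
        rw [← hB]
        simp only [this, mul_ite, mul_zero]
        rw [Finset.sum_ite_eq]
        simp [sq]
        ring
      rw [← hB]
      simp only [this]
      rw [← Finset.mul_sum]
    rw [← hB]
    simp only [this]
    rw [← Finset.mul_sum]
  -- linear term
  have hL : ∫ h in B, ∑ i, ∑ j, (-2 * t' i * Z i j) * h j = 0 := by
    rw [integral_finset_sum _ (fun i _ => cont_int ρ _ (by fun_prop))]
    apply Finset.sum_eq_zero
    intro i _
    rw [integral_finset_sum _ (fun j _ => cont_int ρ _ (by fun_prop))]
    apply Finset.sum_eq_zero
    intro j _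
    rw [integral_const_mul, mom1 ρ j, mul_zero]
  -- constant term
  have hC : ∫ _h in B, (∑ i, (t' i) ^ 2 : ℝ)
      = (4 * Real.pi * ρ ^ 3 / 3) * ‖t'‖ ^ 2 := by
    rw [setIntegral_const, hB, measureReal_def, vol_ball3 ρ hρ, smul_eq_mul, normsq_coords]
  rw [hA, hL, hC]
  -- matrix algebra
  have hDsymm : Dᵀ = D := hD.1
  have htrsq : ∑ i, ∑ j, (Z i j) ^ 2 = (Zᵀ * Z).trace := by
    simp only [Matrix.trace, Matrix.diag, Matrix.mul_apply, Matrix.transpose_apply, sq]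
    rw [Finset.sum_comm]
  have hpos : 0 ≤ (Dᵀ * D).trace := by
    have : (Dᵀ * D).trace = ∑ j, ∑ i, (D i j) ^ 2 := by
      simp only [Matrix.trace, Matrix.diag, Matrix.mul_apply, Matrix.transpose_apply, sq]
    rw [this]
    positivity
  have hfrob : frob D ^ 2 = (Fᵀ * F).trace := by
    rw [frob, Real.sq_sqrt hpos, hDsymm, hD2]
  have htrZ : (Zᵀ * Z).trace
      = frob D ^ 2 + 3 - 2 * (Dᵀ * (Rᵀ * R')).trace := by
    have hexp : Zᵀ * Z = Fᵀ * F - Fᵀ * R' - R'ᵀ * F + R'ᵀ * R' := by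
      rw [hZ]
      rw [Matrix.transpose_sub]
      noncomm_ring
    rw [hexp, Matrix.trace_add, Matrix.trace_sub, Matrix.trace_sub, hR']
    have htr1 : (Matrix.trace (1 : Matrix (Fin 3) (Fin 3) ℝ)) = 3 := by
      simp [Matrix.trace]
    have htrsymm : (R'ᵀ * F).trace = (Fᵀ * R').trace := by
      rw [← Matrix.trace_transpose (R'ᵀ * F), Matrix.transpose_mul, Matrix.transpose_transpose]
    have hFR' : (Fᵀ * R').trace = (Dᵀ * (Rᵀ * R')).trace := by
      rw [hFRD, Matrix.transpose_mul, hDsymm, Matrix.mul_assoc]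
    rw [htr1, htrsymm, hFR', hfrob]
    ring
  rw [htrsq, htrZ]
  ring
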